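/- Let Q be a probability measure on a measurable space M, let L : M → [0,∞) be measurable, and let f : (0,∞) → ℝ be strictly convex and differentiable. Let A ⊆ (0,∞) and N : A → ℝ be a function such that for every γ ∈ A there is a measurable ρ_γ : M → (0,∞) with f'(ρ_γ(θ)) = −(N(γ) + L(θ))/γ for Q-almost every θ and ∫ ρ_γ dQ = 1. Then N is continuous on A. -/

import Mathlib

open MeasureTheory Real Set

section Aux
variable {M : Type*} [MeasurableSpace M]

lemma aux_integral_lt (Q : Measure M) [IsProbabilityMeasure Q]
    {a b : M → ℝ} (hab : ∀ θ, a θ < b θ) (ha : Integrable a Q) (hb : Integrable b Q) :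
    ∫ θ, a θ ∂Q < ∫ θ, b θ ∂Q := by
  have h1 : 0 < ∫ θ, (b θ - a θ) ∂Q := by
    rw [integral_pos_iff_support_of_nonneg_ae
      (Filter.Eventually.of_forall fun θ => sub_nonneg.2 (hab θ).le) (hb.sub ha)]
    have h2 : Function.support (fun θ => b θ - a θ) = Set.univ := by
      ext θ; simp [sub_ne_zero.2 (hab θ).ne']
    rw [h2]; simp
  have h3 := integral_sub hb ha
  rw [h3] at h1
  linarith

lemma aux_tail (Q : Measure M) [IsProbabilityMeasure Q]
    {L : M → ℝ} (hL : Measurable L) {w : M → ℝ} (hw : Integrable w Q)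
    {η : ℝ} (hη : 0 < η) :
    ∃ K : ℝ, 0 < K ∧ ∫ θ in {θ | ¬ L θ ≤ K}, w θ ∂Q < η := by
  set s : ℕ → Set M := fun n => {θ | L θ ≤ n} with hs
  have hsm : ∀ n, MeasurableSet (s n) := fun n => measurableSet_le hL measurable_const
  have hmono : Monotone s := by
    intro m n hmn θ hθ
    simp only [hs, Set.mem_setOf_eq] at hθ ⊢
    exact le_trans hθ (by exact_mod_cast hmn)
  have hU : (⋃ n, s n) = Set.univ := by
    ext θ; simp only [Set.mem_iUnion, Set.mem_univ, iff_true]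
    obtain ⟨n, hn⟩ := exists_nat_ge (L θ)
    exact ⟨n, hn⟩
  have ht := tendsto_setIntegral_of_monotone hsm hmono (by rw [hU]; exact hw.integrableOn)
  rw [hU, setIntegral_univ] at ht
  have hev : ∀ᶠ n in Filter.atTop, ∫ θ, w θ ∂Q - η < ∫ θ in s n, w θ ∂Q :=
    ht.eventually_const_lt (by linarith)
  obtain ⟨n, hn⟩ := (hev.and (Filter.eventually_ge_atTop 1)).exists
  refine ⟨(n : ℝ), by exact_mod_cast hn.2, ?_⟩
  have hsplit := integral_add_compl (hsm n) hw
  have hc : {θ | ¬ L θ ≤ (n:ℝ)} = (s n)ᶜ := by ext θ; simp [hs]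
  rw [hc]
  linarith [hn.1, hsplit]

lemma aux_key (Q : Measure M) [IsProbabilityMeasure Q]
    (L : M → ℝ) (hL_meas : Measurable L) (hL_nonneg : ∀ θ, 0 ≤ L θ)
    (f' : ℝ → ℝ)
    (hmono : StrictMonoOn f' (Ioi 0))
    (hR : OrdConnected (f' '' Ioi 0))
    (A : Set ℝ) (hA : A ⊆ Ioi 0) (N : ℝ → ℝ)
    (hN : ∀ γ ∈ A, ∃ ρ : M → ℝ, Measurable ρ ∧ (∀ θ, 0 < ρ θ) ∧
      (∀ᵐ θ ∂Q, f' (ρ θ) = -((N γ + L θ) / γ)) ∧ ∫ θ, ρ θ ∂Q = 1)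
    (γ₀ : ℝ) (hγ₀ : γ₀ ∈ A) {ε : ℝ} (hε : 0 < ε) :
    ∃ σ₀ > 0, ∀ γ ∈ A, |1/γ - 1/γ₀| < σ₀ → |N γ / γ - N γ₀ / γ₀| ≤ ε := by
  classical
  obtain ⟨ρ, hρm, hρpos, hρae, hρint⟩ := hN γ₀ hγ₀
  have hγ₀pos : 0 < γ₀ := hA hγ₀
  set R : Set ℝ := f' '' Ioi 0 with hRdef
  have hmemR : ∀ x : ℝ, 0 < x → f' x ∈ R := fun x hx => ⟨x, hx, rfl⟩
  set g : ℝ → ℝ := fun y => if h : y ∈ R then h.choose else 0 with hg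
  have hgspec : ∀ y (h : y ∈ R), 0 < g y ∧ f' (g y) = y := by
    intro y h
    have h1 := h.choose_spec
    simp only [hg, dif_pos h]
    exact ⟨h1.1, h1.2⟩
  have hgpos : ∀ y ∈ R, 0 < g y := fun y h => (hgspec y h).1
  have hgval : ∀ y ∈ R, f' (g y) = y := fun y h => (hgspec y h).2
  have hle : ∀ x : ℝ, 0 < x → ∀ y : ℝ, 0 < y → (f' x ≤ f' y ↔ x ≤ y) :=
    fun x hx y hy => hmono.le_iff_le hx hy
  have hlt : ∀ x : ℝ, 0 < x → ∀ y : ℝ, 0 < y → (f' x < f' y ↔ x < y) :=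
    fun x hx y hy => hmono.lt_iff_lt hx hy
  have hg_le : ∀ (x y : ℝ), 0 < x → y ∈ R → y ≤ f' x → g y ≤ x := by
    intro x y hx hy h
    exact (hle _ (hgpos y hy) _ hx).1 (by rw [hgval y hy]; exact h)
  have hle_g : ∀ (x y : ℝ), 0 < x → y ∈ R → f' x ≤ y → x ≤ g y := by
    intro x y hx hy h
    exact (hle _ hx _ (hgpos y hy)).1 (by rw [hgval y hy]; exact h)
  have hlt_g : ∀ (x y : ℝ), 0 < x → y ∈ R → f' x < y → x < g y := by
    intro x y hx hy h
    exact (hlt _ hx _ (hgpos y hy)).1 (by rw [hgval y hy]; exact h)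
  have hg_lt : ∀ (x y : ℝ), 0 < x → y ∈ R → y < f' x → g y < x := by
    intro x y hx hy h
    exact (hlt _ (hgpos y hy) _ hx).1 (by rw [hgval y hy]; exact h)
  have hgmono : ∀ (a b : ℝ), a ∈ R → b ∈ R → a ≤ b → g a ≤ g b := by
    intro a b ha hb hab
    exact hle_g _ _ (hgpos a ha) hb (by rw [hgval a ha]; exact hab)
  have hRabove : ∀ y r₀, r₀ ∈ R → r₀ ≤ y → y ∉ R → ∀ r ∈ R, r < y := by
    intro y r₀ hr₀ hr₀y hy r hr
    by_contra h
    push_neg at h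
    exact hy (hR.out hr₀ hr ⟨hr₀y, h⟩)
  have hRbelow : ∀ y r₀, r₀ ∈ R → y ≤ r₀ → y ∉ R → ∀ r ∈ R, y < r := by
    intro y r₀ hr₀ hr₀y hy r hr
    by_contra h
    push_neg at h
    exact hy (hR.out hr hr₀ ⟨h, hr₀y⟩)
  -- comparison functions
  set F : ℝ → ℝ := fun x =>
    if 0 < x then (if f' x + ε/2 ∈ R then min (g (f' x + ε/2)) (x+1) else x + 1) else 0 with hF
  set G : ℝ → ℝ := fun x =>
    if 0 < x then (if f' x - ε/2 ∈ R then g (f' x - ε/2) else 0) else 0 with hG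
  have hFnonneg : ∀ x, 0 ≤ F x := by
    intro x
    simp only [hF]
    split_ifs with h1 h2
    · exact le_min (hgpos _ h2).le (by linarith)
    · linarith
    · exact le_refl 0
  have hGnonneg : ∀ x, 0 ≤ G x := by
    intro x
    simp only [hG]
    split_ifs with h1 h2
    · exact (hgpos _ h2).le
    · exact le_refl 0
    · exact le_refl 0
  have hFmono : Monotone F := by
    intro x y hxy
    by_cases hx : 0 < x
    · have hy0 : 0 < y := lt_of_lt_of_le hx hxy
      have hfxy : f' x ≤ f' y := (hle x hx y hy0).2 hxy
      simp only [hF, if_pos hx, if_pos hy0]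
      by_cases h1 : f' x + ε/2 ∈ R
      · by_cases h2 : f' y + ε/2 ∈ R
        · simp only [if_pos h1, if_pos h2]
          exact min_le_min (hgmono _ _ h1 h2 (by linarith)) (by linarith)
        · simp only [if_pos h1, if_neg h2]
          exact le_trans (min_le_right _ _) (by linarith)
      · by_cases h2 : f' y + ε/2 ∈ R
        · exfalso
          have hx' := hmemR x hx
          have := hRabove (f' x + ε/2) (f' x) hx' (by linarith) h1 _ h2
          linarith
        · simp only [if_neg h1, if_neg h2]; linarith
    · simp only [hF, if_neg hx]
      exact hFnonneg y
  have hGmono : Monotone G := by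
    intro x y hxy
    by_cases hx : 0 < x
    · have hy0 : 0 < y := lt_of_lt_of_le hx hxy
      have hfxy : f' x ≤ f' y := (hle x hx y hy0).2 hxy
      simp only [hG, if_pos hx, if_pos hy0]
      by_cases h1 : f' x - ε/2 ∈ R
      · by_cases h2 : f' y - ε/2 ∈ R
        · simp only [if_pos h1, if_pos h2]
          exact hgmono _ _ h1 h2 (by linarith)
        · exfalso
          have hy' := hmemR y hy0
          have := hRbelow (f' y - ε/2) (f' y) hy' (by linarith) h2 _ h1
          linarith
      · simp only [if_neg h1]
        split_ifs with h2
        · exact (hgpos _ h2).le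
        · exact le_refl 0
    · simp only [hG, if_neg hx]
      split_ifs with h1 h2
      · exact (hgpos _ h2).le
      · exact le_refl 0
      · exact le_refl 0
  have hFcomp_meas : Measurable (fun θ => F (ρ θ)) := hFmono.measurable.comp hρm
  have hGcomp_meas : Measurable (fun θ => G (ρ θ)) := hGmono.measurable.comp hρm
  have hFgt : ∀ θ, ρ θ < F (ρ θ) := by
    intro θ
    have hp := hρpos θ
    simp only [hF, if_pos hp]
    split_ifs with h2
    · exact lt_min (hlt_g _ _ hp h2 (by linarith)) (by linarith)
    · linarith
  have hFle : ∀ θ, F (ρ θ) ≤ ρ θ + 1 := by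
    intro θ
    have hp := hρpos θ
    simp only [hF, if_pos hp]
    split_ifs with h2
    · exact min_le_right _ _
    · exact le_refl _
  have hGlt : ∀ θ, G (ρ θ) < ρ θ := by
    intro θ
    have hp := hρpos θ
    simp only [hG, if_pos hp]
    split_ifs with h2
    · exact hg_lt _ _ hp h2 (by linarith)
    · exact hp
  have hρint' : Integrable ρ Q := by
    by_contra h
    rw [integral_undef h] at hρint
    norm_num at hρint
  have hρ1int : Integrable (fun θ => ρ θ + 1) Q := hρint'.add (integrable_const 1)
  have hFint : Integrable (fun θ => F (ρ θ)) Q := by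
    refine hρ1int.mono hFcomp_meas.aestronglyMeasurable (Filter.Eventually.of_forall fun θ => ?_)
    rw [Real.norm_eq_abs, Real.norm_eq_abs, abs_of_nonneg (hFnonneg _),
      abs_of_nonneg (by linarith [(hρpos θ)] : (0:ℝ) ≤ ρ θ + 1)]
    exact hFle θ
  have hGint : Integrable (fun θ => G (ρ θ)) Q := by
    refine hρint'.mono hGcomp_meas.aestronglyMeasurable (Filter.Eventually.of_forall fun θ => ?_)
    rw [Real.norm_eq_abs, Real.norm_eq_abs, abs_of_nonneg (hGnonneg _),
      abs_of_nonneg (hρpos θ).le]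
    exact (hGlt θ).le
  -- the gaps
  obtain ⟨η, hηdef, hηpos⟩ : ∃ η : ℝ, η = (∫ θ, F (ρ θ) ∂Q) - 1 ∧ 0 < η := by
    refine ⟨_, rfl, ?_⟩
    have := aux_integral_lt Q hFgt hρint' hFint
    rw [hρint] at this
    linarith
  obtain ⟨η', hη'def, hη'pos⟩ : ∃ η' : ℝ, η' = 1 - (∫ θ, G (ρ θ) ∂Q) ∧ 0 < η' := by
    refine ⟨_, rfl, ?_⟩
    have := aux_integral_lt Q hGlt hGint hρint'
    rw [hρint] at this
    linarith
  -- tail cutoff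
  obtain ⟨K₀, hK₀pos, hK₀⟩ := aux_tail Q hL_meas hρ1int hηpos
  obtain ⟨K₁, hK₁pos, hK₁ge⟩ :
      ∃ K₁ : ℝ, 0 < K₁ ∧ 2*γ₀*(-(f' (η'/2)) - N γ₀/γ₀) ≤ K₁ :=
    ⟨max 1 (2*γ₀*(-(f' (η'/2)) - N γ₀/γ₀)), lt_of_lt_of_le one_pos (le_max_left _ _),
      le_max_right _ _⟩
  obtain ⟨σ₀, hσ₀pos, hσ₀le1, hσ₀le2, hσ₀le3⟩ :
      ∃ σ₀ : ℝ, 0 < σ₀ ∧ σ₀ ≤ 1/(2*γ₀) ∧ σ₀ ≤ ε/(2*K₀) ∧ σ₀ ≤ ε/(2*K₁) := by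
    refine ⟨min (1/(2*γ₀)) (min (ε/(2*K₀)) (ε/(2*K₁))), ?_, min_le_left _ _,
      le_trans (min_le_right _ _) (min_le_left _ _),
      le_trans (min_le_right _ _) (min_le_right _ _)⟩
    apply lt_min (by positivity)
    exact lt_min (by positivity) (by positivity)
  refine ⟨σ₀, hσ₀pos, ?_⟩
  intro γ hγA hclose
  by_contra habs
  push_neg at habs
  obtain ⟨ρ₂, hρ₂m, hρ₂pos, hρ₂ae, hρ₂int⟩ := hN γ hγA
  have hγpos : 0 < γ := hA hγA
  have hγinvpos : 0 < 1/γ := by positivity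
  have hτabs : |1/γ₀ - 1/γ| < σ₀ := by rw [abs_sub_comm]; exact hclose
  have hρ₂int' : Integrable ρ₂ Q := by
    by_contra h
    rw [integral_undef h] at hρ₂int
    norm_num at hρ₂int
  have hae12 : ∀ᵐ θ ∂Q,
      f' (ρ₂ θ) = f' (ρ θ) + ((1/γ₀ - 1/γ) * L θ + (N γ₀/γ₀ - N γ/γ)) := by
    filter_upwards [hρae, hρ₂ae] with θ h1 h2
    rw [h1, h2]
    field_simp
    ring
  rcases lt_abs.1 habs with hcase | hcase
  · -- Case 2 : N γ/γ - N γ₀/γ₀ > ε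
    obtain ⟨S, hSdef, hSm⟩ : ∃ S : Set M, S = {θ | L θ ≤ K₁} ∧ MeasurableSet S :=
      ⟨_, rfl, measurableSet_le hL_meas measurable_const⟩
    have hu'half : 1/(2*γ₀) ≤ 1/γ := by
      have h2 := abs_lt.1 hτabs
      have e : 1/γ₀ - 1/(2*γ₀) = 1/(2*γ₀) := by
        field_simp
        ring
      linarith [h2.2]
    have hkeyS : ∀ᵐ θ ∂Q, θ ∈ S → ρ₂ θ ≤ G (ρ θ) := by
      filter_upwards [hae12] with θ h12 hθS
      rw [hSdef] at hθS
      have hLθ : L θ ≤ K₁ := hθS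
      have hτL : (1/γ₀ - 1/γ) * L θ ≤ ε/2 := by
        rcases le_or_gt (1/γ₀ - 1/γ) 0 with h | h
        · have := mul_nonpos_of_nonpos_of_nonneg h (hL_nonneg θ)
          linarith
        · have h1 : 1/γ₀ - 1/γ < ε/(2*K₁) :=
            lt_of_lt_of_le (lt_of_le_of_lt (le_abs_self _) hτabs) hσ₀le3
          have h2 : (1/γ₀ - 1/γ) * L θ ≤ (1/γ₀ - 1/γ) * K₁ :=
            mul_le_mul_of_nonneg_left hLθ h.le
          have h3 : (1/γ₀ - 1/γ) * K₁ < (ε/(2*K₁)) * K₁ :=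
            mul_lt_mul_of_pos_right h1 hK₁pos
          have h4 : (ε/(2*K₁)) * K₁ = ε/2 := by field_simp
          linarith
      have h2 : f' (ρ₂ θ) ≤ f' (ρ θ) - ε/2 := by rw [h12]; linarith
      have hyR : f' (ρ θ) - ε/2 ∈ R :=
        hR.out (hmemR _ (hρ₂pos θ)) (hmemR _ (hρpos θ)) ⟨h2, by linarith⟩
      have hGform : G (ρ θ) = g (f' (ρ θ) - ε/2) := by
        simp only [hG, if_pos (hρpos θ), if_pos hyR]
      rw [hGform]
      exact hle_g _ _ (hρ₂pos θ) hyR h2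
    have hkeyT : ∀ᵐ θ ∂Q, θ ∈ Sᶜ → ρ₂ θ ≤ η'/2 := by
      filter_upwards [hρ₂ae] with θ h2 hθ
      rw [Set.mem_compl_iff, hSdef] at hθ
      have hLθ : K₁ < L θ := not_le.1 hθ
      have hb : f' (ρ₂ θ) ≤ f' (η'/2) := by
        rw [h2]
        have e1 : -((N γ + L θ)/γ) = -((1/γ) * L θ) - N γ/γ := by
          field_simp
          ring
        rw [e1]
        have hcc : N γ₀/γ₀ ≤ N γ/γ := by linarith
        have s1 : (1/γ) * K₁ ≤ (1/γ) * L θ := mul_le_mul_of_nonneg_left hLθ.le hγinvpos.le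
        have s2 : (1/(2*γ₀)) * K₁ ≤ (1/γ) * K₁ :=
          mul_le_mul_of_nonneg_right hu'half hK₁pos.le
        have s3 : -((1/(2*γ₀)) * K₁) - N γ₀/γ₀ ≤ f' (η'/2) := by
          have h5 : (0:ℝ) < 1/(2*γ₀) := by positivity
          have h6 := mul_le_mul_of_nonneg_left hK₁ge h5.le
          have e2 : (1/(2*γ₀)) * (2*γ₀*(-(f' (η'/2)) - N γ₀/γ₀)) =
              -(f' (η'/2)) - N γ₀/γ₀ := by
            field_simp
          rw [e2] at h6
          linarith
        linarith
      exact (hle _ (hρ₂pos θ) _ (half_pos hη'pos)).1 hb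
    have hsplit := integral_add_compl hSm hρ₂int'
    have h1 : ∫ θ in S, ρ₂ θ ∂Q ≤ ∫ θ in S, G (ρ θ) ∂Q :=
      setIntegral_mono_on_ae hρ₂int'.integrableOn hGint.integrableOn hSm hkeyS
    have h1' : ∫ θ in S, G (ρ θ) ∂Q ≤ ∫ θ, G (ρ θ) ∂Q :=
      setIntegral_le_integral hGint (Filter.Eventually.of_forall fun θ => hGnonneg _)
    have h2 : ∫ θ in Sᶜ, ρ₂ θ ∂Q ≤ ∫ θ in Sᶜ, (fun _ => η'/2) θ ∂Q := by
      refine setIntegral_mono_on_ae hρ₂int'.integrableOn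
        (integrable_const _).integrableOn hSm.compl ?_
      filter_upwards [hkeyT] with θ h hθ
      exact h hθ
    have h3 : ∫ θ in Sᶜ, (fun _ => η'/2) θ ∂Q ≤ η'/2 := by
      rw [setIntegral_const]
      have hm1 : (Q Sᶜ).toReal ≤ 1 := by
        have := ENNReal.toReal_mono (measure_ne_top Q univ) (measure_mono (subset_univ Sᶜ))
        simpa using this
      rw [smul_eq_mul, measureReal_def]
      nlinarith [ENNReal.toReal_nonneg (a := Q Sᶜ), hη'pos]
    rw [hρ₂int] at hsplit
    linarith
  · -- Case 1 : N γ₀/γ₀ - N γ/γ > ε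
    obtain ⟨S, hSdef, hSm⟩ : ∃ S : Set M, S = {θ | L θ ≤ K₀} ∧ MeasurableSet S :=
      ⟨_, rfl, measurableSet_le hL_meas measurable_const⟩
    have hkeyS : ∀ᵐ θ ∂Q, θ ∈ S → F (ρ θ) ≤ ρ₂ θ := by
      filter_upwards [hae12] with θ h12 hθS
      rw [hSdef] at hθS
      have hLθ : L θ ≤ K₀ := hθS
      have hτL : -(ε/2) ≤ (1/γ₀ - 1/γ) * L θ := by
        rcases le_or_gt 0 (1/γ₀ - 1/γ) with h | h
        · have := mul_nonneg h (hL_nonneg θ)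
          linarith
        · have h1 : -(1/γ₀ - 1/γ) < ε/(2*K₀) :=
            lt_of_lt_of_le (lt_of_le_of_lt (neg_le_abs _) hτabs) hσ₀le2
          have h2 : (-(1/γ₀ - 1/γ)) * L θ ≤ (-(1/γ₀ - 1/γ)) * K₀ :=
            mul_le_mul_of_nonneg_left hLθ (by linarith)
          have h3 : (-(1/γ₀ - 1/γ)) * K₀ < (ε/(2*K₀)) * K₀ :=
            mul_lt_mul_of_pos_right h1 hK₀pos
          have h4 : (ε/(2*K₀)) * K₀ = ε/2 := by field_simp
          linarith
      have h2 : f' (ρ θ) + ε/2 ≤ f' (ρ₂ θ) := by rw [h12]; linarith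
      have hyR : f' (ρ θ) + ε/2 ∈ R :=
        hR.out (hmemR _ (hρpos θ)) (hmemR _ (hρ₂pos θ)) ⟨by linarith, h2⟩
      have hFform : F (ρ θ) = min (g (f' (ρ θ) + ε/2)) (ρ θ + 1) := by
        simp only [hF, if_pos (hρpos θ), if_pos hyR]
      rw [hFform]
      exact le_trans (min_le_left _ _) (hg_le _ _ (hρ₂pos θ) hyR h2)
    have hsplit := integral_add_compl hSm hFint
    have h1 : ∫ θ in S, F (ρ θ) ∂Q ≤ ∫ θ in S, ρ₂ θ ∂Q :=
      setIntegral_mono_on_ae hFint.integrableOn hρ₂int'.integrableOn hSm hkeyS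
    have h1' : ∫ θ in S, ρ₂ θ ∂Q ≤ 1 := by
      rw [← hρ₂int]
      exact setIntegral_le_integral hρ₂int' (Filter.Eventually.of_forall fun θ => (hρ₂pos θ).le)
    have h2 : ∫ θ in Sᶜ, F (ρ θ) ∂Q ≤ ∫ θ in Sᶜ, (ρ θ + 1) ∂Q :=
      setIntegral_mono_on_ae hFint.integrableOn hρ1int.integrableOn hSm.compl
        (Filter.Eventually.of_forall fun θ _ => hFle θ)
    have h3 : ∫ θ in Sᶜ, (ρ θ + 1) ∂Q < η := by
      have hceq : Sᶜ = {θ | ¬ L θ ≤ K₀} := by rw [hSdef]; ext θ; simp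
      rw [hceq]
      exact hK₀
    linarith
end Aux

/-- **Lemma 1 (second part): the normalization function is continuous.**
Let `A ⊆ (0,∞)` be a set of permissible regularization factors and `N : A → ℝ` be
such that for every `γ ∈ A` there is a measurable, strictly positive density `ρ_γ`
with `f' (ρ_γ θ) = -(N γ + L θ)/γ` `Q`-a.e. and `∫ ρ_γ dQ = 1`.
Then `N` is continuous on `A`. -/
theorem erm_fdr_normalization_function_continuousOn
    {M : Type*} [MeasurableSpace M]
    (Q : Measure M) [IsProbabilityMeasure Q]
    (L : M → ℝ) (hL_meas : Measurable L) (hL_nonneg : ∀ θ, 0 ≤ L θ)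
    (f f' : ℝ → ℝ)
    (hf_conv : StrictConvexOn ℝ (Ioi 0) f)
    (hf_deriv : ∀ x ∈ Ioi (0 : ℝ), HasDerivAt f (f' x) x)
    (A : Set ℝ) (hA : A ⊆ Ioi 0)
    (N : ℝ → ℝ)
    (hN : ∀ γ ∈ A, ∃ ρ : M → ℝ, Measurable ρ ∧ (∀ θ, 0 < ρ θ) ∧
      (∀ᵐ θ ∂Q, f' (ρ θ) = -((N γ + L θ) / γ)) ∧ ∫ θ, ρ θ ∂Q = 1) :
    ContinuousOn N A := by
  have hd : ∀ x ∈ Ioi (0:ℝ), DifferentiableAt ℝ f x :=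
    fun x hx => (hf_deriv x hx).differentiableAt
  have hmono : StrictMonoOn f' (Ioi 0) := by
    intro x hx y hy hxy
    have h1 := hf_conv.strictMonoOn_deriv hd hx hy hxy
    rwa [(hf_deriv x hx).deriv, (hf_deriv y hy).deriv] at h1
  have hR : OrdConnected (f' '' Ioi 0) :=
    (ordConnected_Ioi).image_hasDerivWithinAt (fun x hx => (hf_deriv x hx).hasDerivWithinAt)
  rw [Metric.continuousOn_iff]
  intro γ₀ hγ₀ ε hε
  have hγ₀pos : 0 < γ₀ := hA hγ₀
  have hεc : (0:ℝ) < ε/(3*γ₀) := by positivity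
  obtain ⟨σ₀, hσ₀pos, hkey⟩ :=
    aux_key Q L hL_meas hL_nonneg f' hmono hR A hA N hN γ₀ hγ₀ hεc
  have hcabs : (0:ℝ) ≤ |N γ₀ / γ₀| := abs_nonneg _
  refine ⟨min (γ₀/2) (min (ε/(2*(|N γ₀ / γ₀|+1))) (σ₀*γ₀^2/2)), ?_, ?_⟩
  · apply lt_min (by positivity)
    exact lt_min (by positivity) (by positivity)
  intro γ hγA hdist
  rw [Real.dist_eq] at hdist
  have hγpos : 0 < γ := hA hγA
  have hd1 : |γ - γ₀| < γ₀/2 := lt_of_lt_of_le hdist (min_le_left _ _)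
  have hd2 : |γ - γ₀| < ε/(2*(|N γ₀ / γ₀|+1)) :=
    lt_of_lt_of_le hdist (le_trans (min_le_right _ _) (min_le_left _ _))
  have hd3 : |γ - γ₀| < σ₀*γ₀^2/2 :=
    lt_of_lt_of_le hdist (le_trans (min_le_right _ _) (min_le_right _ _))
  have habs1 := abs_lt.1 hd1
  have hγlo : γ₀/2 < γ := by linarith [habs1.1]
  have hγhi : γ < γ₀ + γ₀/2 := by linarith [habs1.2]
  have hinv : |1/γ - 1/γ₀| < σ₀ := by
    have e : 1/γ - 1/γ₀ = (γ₀ - γ)/(γ*γ₀) := by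
      field_simp
    have hγγ₀ : 0 < γ*γ₀ := by positivity
    rw [e, abs_div, abs_of_pos hγγ₀, div_lt_iff₀ hγγ₀, abs_sub_comm]
    have h5 : σ₀ * (γ₀^2/2) ≤ σ₀ * (γ*γ₀) := by
      apply mul_le_mul_of_nonneg_left _ hσ₀pos.le
      nlinarith
    nlinarith
  have hcc := hkey γ hγA hinv
  rw [Real.dist_eq]
  have e1 : N γ - N γ₀ = γ * (N γ/γ - N γ₀/γ₀) + (γ - γ₀) * (N γ₀/γ₀) := by
    field_simp
    ring
  rw [e1]
  calc |γ * (N γ/γ - N γ₀/γ₀) + (γ - γ₀) * (N γ₀/γ₀)|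
      ≤ |γ * (N γ/γ - N γ₀/γ₀)| + |(γ - γ₀) * (N γ₀/γ₀)| := abs_add_le _ _
    _ = γ * |N γ/γ - N γ₀/γ₀| + |γ - γ₀| * |N γ₀/γ₀| := by
        rw [abs_mul, abs_mul, abs_of_pos hγpos]
    _ < ε := by
        have t1 : γ * |N γ/γ - N γ₀/γ₀| ≤ γ * (ε/(3*γ₀)) :=
          mul_le_mul_of_nonneg_left hcc hγpos.le
        have t2 : γ * (ε/(3*γ₀)) < (γ₀ + γ₀/2) * (ε/(3*γ₀)) :=
          mul_lt_mul_of_pos_right hγhi (by positivity)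
        have t3 : (γ₀ + γ₀/2) * (ε/(3*γ₀)) = ε/2 := by
          field_simp
          ring
        have t4 : |γ - γ₀| * |N γ₀/γ₀| ≤ |γ - γ₀| * (|N γ₀/γ₀|+1) :=
          mul_le_mul_of_nonneg_left (by linarith) (abs_nonneg _)
        have t5 : |γ - γ₀| * (|N γ₀/γ₀|+1) < (ε/(2*(|N γ₀ / γ₀|+1))) * (|N γ₀/γ₀|+1) :=
          mul_lt_mul_of_pos_right hd2 (by positivity)
        have t6 : (ε/(2*(|N γ₀ / γ₀|+1))) * (|N γ₀/γ₀|+1) = ε/2 := by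
          have ha : |N γ₀/γ₀|+1 ≠ 0 := by positivity
          field_simp
        linarith
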